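/- For an irrational real number L > 0, the map x ↦ (⌊x + kL⌋)_{k ≥ 1} is injective on the interval [0, L). That is, if 0 ≤ x < y < L, then there exists a positive integer k such that ⌊x + kL⌋ ≠ ⌊y + kL⌋. -/

import Mathlib

/-- Given a positive step `s` and a threshold `c ≥ s`, some positive multiple of `s`
lands in `(c, c + s]`. -/
lemma aux_step (s c : ℝ) (hs : 0 < s) (hc : s ≤ c) :
    ∃ t : ℕ, 1 ≤ t ∧ c < (t : ℝ) * s ∧ (t : ℝ) * s ≤ c + s := by
  have h0 : 0 ≤ c / s := div_nonneg (hs.le.trans hc) hs.le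
  have hle : (⌊c / s⌋₊ : ℝ) ≤ c / s := Nat.floor_le h0
  have hlt : c / s < (⌊c / s⌋₊ : ℝ) + 1 := Nat.lt_floor_add_one _
  have hcs : c = (c / s) * s := by field_simp
  refine ⟨⌊c / s⌋₊ + 1, Nat.le_add_left _ _, ?_, ?_⟩
  · push_cast
    nlinarith
  · push_cast
    nlinarith

/-- For an irrational real `L > 0`, the map `x ↦ (⌊x + kL⌋)_{k ≥ 1}` is injective on `[0, L)`:
if `0 ≤ x < y < L` then some positive integer `k` has `⌊x + kL⌋ ≠ ⌊y + kL⌋`. -/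
theorem stmt_0 (L : ℝ) (hL : Irrational L) (hLpos : 0 < L)
    (x y : ℝ) (hx : 0 ≤ x) (hxy : x < y) (hy : y < L) :
    ∃ k : ℕ, 0 < k ∧ ⌊x + (k : ℝ) * L⌋ ≠ ⌊y + (k : ℝ) * L⌋ := by
  -- It suffices to find `k ≥ 1` and an integer `n` with `x + kL < n < y + kL`.
  suffices h : ∃ k : ℕ, 0 < k ∧ ∃ n : ℤ, x + (k : ℝ) * L < n ∧ (n : ℝ) < y + (k : ℝ) * L by
    obtain ⟨k, hk, n, h1, h2⟩ := h
    refine ⟨k, hk, fun heq => ?_⟩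
    have hfl : ⌊x + (k : ℝ) * L⌋ < n := Int.floor_lt.mpr h1
    have hfr : n ≤ ⌊y + (k : ℝ) * L⌋ := Int.le_floor.mpr h2.le
    omega
  have hεpos : 0 < y - x := sub_pos.mpr hxy
  obtain ⟨N, hN⟩ := exists_nat_gt (1 / (y - x))
  have hNpos : 0 < N := by
    by_contra h
    push_neg at h
    interval_cases N
    simp only [Nat.cast_zero] at hN
    nlinarith [one_div_pos.mpr hεpos]
  obtain ⟨d, hd0, hdN, hdabs⟩ := Real.exists_nat_abs_mul_sub_round_le L hNpos
  set m0 : ℤ := round ((d : ℝ) * L) with hm0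
  have hδirr : Irrational ((d : ℝ) * L - m0) := (hL.natCast_mul hd0.ne').sub_intCast m0
  have hδ0 : (d : ℝ) * L - m0 ≠ 0 := by
    intro h
    exact hδirr.ne_int 0 (by simpa using h)
  have hδε : |(d : ℝ) * L - m0| < y - x := by
    have h1 : (1 : ℝ) / (N + 1) < y - x := by
      rw [div_lt_iff₀ (by positivity)]
      rw [div_lt_iff₀ hεpos] at hN
      nlinarith
    exact lt_of_le_of_lt hdabs h1
  rcases hδ0.lt_or_gt with hneg | hpos
  · -- δ < 0 : use step s = m0 - d*L, target interval (j + x, j + y)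
    set s : ℝ := (m0 : ℝ) - (d : ℝ) * L with hs
    have hspos : 0 < s := by simp only [hs]; linarith
    have hsε : s < y - x := by
      rw [abs_of_neg hneg] at hδε
      simp only [hs]; linarith
    have hc : s ≤ ((⌈s⌉ : ℝ)) + x := le_add_of_le_of_nonneg (Int.le_ceil s) hx
    obtain ⟨t, ht1, htl, htr⟩ := aux_step s ((⌈s⌉ : ℝ) + x) hspos hc
    refine ⟨t * d, Nat.mul_pos ht1 hd0, t * m0 - ⌈s⌉, ?_, ?_⟩
    · have hkey : (t : ℝ) * (d : ℝ) * L = (t : ℝ) * m0 - (t : ℝ) * s := by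
        rw [hs]; ring
      push_cast
      linarith
    · have hkey : (t : ℝ) * (d : ℝ) * L = (t : ℝ) * m0 - (t : ℝ) * s := by
        rw [hs]; ring
      push_cast
      linarith
  · -- δ > 0 : use step s = d*L - m0, target interval (j - y, j - x)
    set s : ℝ := (d : ℝ) * L - (m0 : ℝ) with hs
    have hspos : 0 < s := hpos
    have hsε : s < y - x := by rwa [abs_of_pos hpos] at hδε
    have hc : s ≤ ((⌈s + y⌉ : ℝ)) - y := by
      have := Int.le_ceil (s + y)
      linarith
    obtain ⟨t, ht1, htl, htr⟩ := aux_step s ((⌈s + y⌉ : ℝ) - y) hspos hc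
    refine ⟨t * d, Nat.mul_pos ht1 hd0, ⌈s + y⌉ + t * m0, ?_, ?_⟩
    · have hkey : (t : ℝ) * (d : ℝ) * L = (t : ℝ) * s + (t : ℝ) * m0 := by
        rw [hs]; ring
      push_cast
      linarith
    · have hkey : (t : ℝ) * (d : ℝ) * L = (t : ℝ) * s + (t : ℝ) * m0 := by
        rw [hs]; ring
      push_cast
      linarith
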